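/- Any collection F of 3-element subsets of a 6-element set with the property that |r △ s| ∈ {4,6} for all distinct r,s ∈ F, and such that the even lattice D_6 ∩ span⁰(F) contains no vector of square 2, has at most 3 elements; and 3 is attained. -/

import Mathlib

set_option maxRecDepth 10000

/-- Characteristic vector of a subset of `{1,…,n}` in `ℚⁿ`. -/
def charVecQ {n : ℕ} (s : Finset (Fin n)) : Fin n → ℚ := fun i => if i ∈ s then 1 else 0

/-- `span⁰(F) = {Σ_s α_s v(s) : Σ α_s = 0}`. -/
def spanZero {n : ℕ} (F : Finset (Finset (Fin n))) : Set (Fin n → ℚ) :=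
  {x | ∃ α : Finset (Fin n) → ℚ, (∑ s ∈ F, α s) = 0 ∧ x = ∑ s ∈ F, α s • charVecQ s}

/-- Membership in `D_n ⊆ ℤⁿ ⊆ ℚⁿ`: integral coordinates with even sum. -/
def inDn {n : ℕ} (x : Fin n → ℚ) : Prop :=
  (∀ i, ∃ k : ℤ, x i = k) ∧ ∃ k : ℤ, (∑ i, x i) = 2 * k

/-- `D_n ∩ span⁰(F)` is root free: it contains no vector of square `2`. -/
def rootFreeColl {n : ℕ} (F : Finset (Finset (Fin n))) : Prop :=
  ∀ x ∈ spanZero F, inDn x → (∑ i, x i * x i) ≠ 2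

/-- Admissibility of a collection of subsets. -/
def admissibleColl {n : ℕ} (F : Finset (Finset (Fin n))) : Prop :=
  (∀ r ∈ F, ∀ s ∈ F, (symmDiff r s).card ∈ ({0, 4, 6, 8, 12} : Set ℕ)) ∧ rootFreeColl F

def L : List (Finset (Fin 6)) :=
  [{0,1,2}, {0,1,3}, {0,1,4}, {0,1,5}, {0,2,3}, {0,2,4}, {0,2,5}, {0,3,4}, {0,3,5}, {0,4,5},
   {1,2,3}, {1,2,4}, {1,2,5}, {1,3,4}, {1,3,5}, {1,4,5}, {2,3,4}, {2,3,5}, {2,4,5}, {3,4,5}]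

def fZ (p : Finset (Fin 6)) (k : Fin 6) : ℤ := if k ∈ p then 1 else 0

def rel (p q r s : Finset (Fin 6)) (i j : Fin 6) : Prop :=
  ∀ k : Fin 6, fZ p k + fZ q k - fZ r k - fZ s k = (if k = i then 2 else if k = j then -2 else 0)

instance (p q r s : Finset (Fin 6)) (i j : Fin 6) : Decidable (rel p q r s i j) := by
  unfold rel; infer_instance

lemma memL : ∀ s : Finset (Fin 6), s.card = 3 → s ∈ L := by decide

lemma sd4 : ∀ a ∈ L, ∀ b ∈ L, (symmDiff a b).card = 4 → (a ∩ b).card = 1 := by decide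

lemma sd6 : ∀ a ∈ L, ∀ b ∈ L, ∀ c ∈ L, (symmDiff a b).card = 6 →
    ((symmDiff a c).card = 4 ∨ (symmDiff a c).card = 6) →
    ((symmDiff b c).card = 4 ∨ (symmDiff b c).card = 6) → False := by decide

set_option maxHeartbeats 4000000 in
set_option synthInstance.maxHeartbeats 400000 in
set_option synthInstance.maxSize 1024 in
lemma key : ∀ a ∈ L, ∀ b ∈ L, (a ∩ b).card = 1 → ∀ c ∈ L, (a ∩ c).card = 1 →
    (b ∩ c).card = 1 → ∀ d ∈ L, (a ∩ d).card = 1 → (b ∩ d).card = 1 → (c ∩ d).card = 1 →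
    ∃ i j : Fin 6, i ≠ j ∧ (rel a b c d i j ∨ rel a c b d i j ∨ rel a d b c i j) := by decide

lemma charVec_cast (t : Finset (Fin 6)) (k : Fin 6) : charVecQ t k = ((fZ t k : ℤ) : ℚ) := by
  by_cases h : k ∈ t <;> simp [charVecQ, fZ, h]

lemma mkroot {F : Finset (Finset (Fin 6))} (hroot : rootFreeColl F)
    {p q r s : Finset (Fin 6)} (hp : p ∈ F) (hq : q ∈ F) (hr : r ∈ F) (hs : s ∈ F)
    (hpq : p ≠ q) (hpr : p ≠ r) (hps : p ≠ s) (hqr : q ≠ r) (hqs : q ≠ s) (hrs : r ≠ s)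
    {i j : Fin 6} (hij : i ≠ j) (hrel : rel p q r s i j) : False := by
  set x : Fin 6 → ℚ := fun k => (if k = i then 1 else 0) - (if k = j then 1 else 0) with hxdef
  set α : Finset (Fin 6) → ℚ := fun t =>
    if t = p then 1/2 else if t = q then 1/2 else if t = r then -(1/2) else
      if t = s then -(1/2) else 0 with hαdef
  have hsub : ({p, q, r, s} : Finset (Finset (Fin 6))) ⊆ F := by
    intro t ht
    simp only [Finset.mem_insert, Finset.mem_singleton] at ht
    rcases ht with h | h | h | h <;> subst h <;> assumption
  have hα0 : ∀ t ∈ F, t ∉ ({p, q, r, s} : Finset (Finset (Fin 6))) → α t = 0 := by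
    intro t _ ht
    simp only [Finset.mem_insert, Finset.mem_singleton, not_or] at ht
    simp [hαdef, ht.1, ht.2.1, ht.2.2.1, ht.2.2.2]
  have hsum4 : ∀ g : Finset (Fin 6) → ℚ, (∀ t ∈ F, t ∉ ({p, q, r, s} : Finset (Finset (Fin 6))) → g t = 0) →
      ∑ t ∈ F, g t = g p + g q + g r + g s := by
    intro g hg
    rw [← Finset.sum_subset hsub hg]
    rw [Finset.sum_insert (by simp [hpq, hpr, hps]),
        Finset.sum_insert (by simp [hqr, hqs]),
        Finset.sum_insert (by simp [hrs]), Finset.sum_singleton]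
    ring
  have hαp : α p = 1/2 := by simp [hαdef]
  have hαq : α q = 1/2 := by simp [hαdef, hpq.symm]
  have hαr : α r = -(1/2) := by simp [hαdef, hpr.symm, hqr.symm]
  have hαs : α s = -(1/2) := by simp [hαdef, hps.symm, hqs.symm, hrs.symm]
  have hx : x ∈ spanZero F := by
    refine ⟨α, ?_, ?_⟩
    · rw [hsum4 α hα0, hαp, hαq, hαr, hαs]
      norm_num
    · funext k
      rw [Finset.sum_apply]
      have hcg : ∑ t ∈ F, (α t • charVecQ t) k = ∑ t ∈ F, α t * charVecQ t k := by
        apply Finset.sum_congr rfl; intro t _; simp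
      rw [hcg, hsum4 (fun t => α t * charVecQ t k)
          (fun t htF htm => by show α t * charVecQ t k = 0; rw [hα0 t htF htm]; ring)]
      simp only [hαp, hαq, hαr, hαs, charVec_cast]
      have hQ : ((fZ p k : ℚ) + fZ q k - fZ r k - fZ s k)
          = ((if k = i then 2 else if k = j then -2 else 0 : ℤ) : ℚ) := by
        exact_mod_cast congrArg (fun z : ℤ => (z : ℚ)) (hrel k)
      rcases eq_or_ne k i with hki | hki
      · have hxk : x k = 1 := by simp [hxdef, hki, hij]
        rw [if_pos hki] at hQ
        push_cast at hQ
        rw [hxk]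
        linarith
      · rcases eq_or_ne k j with hkj | hkj
        · have hxk : x k = -1 := by simp [hxdef, hki, hkj, Ne.symm hij]
          rw [if_neg hki, if_pos hkj] at hQ
          push_cast at hQ
          rw [hxk]
          linarith
        · have hxk : x k = 0 := by simp [hxdef, hki, hkj]
          rw [if_neg hki, if_neg hkj] at hQ
          push_cast at hQ
          rw [hxk]
          linarith
  have hDn : inDn x := by
    constructor
    · intro k
      rcases eq_or_ne k i with h | h
      · exact ⟨1, by simp [hxdef, h, hij]⟩
      · rcases eq_or_ne k j with h' | h'
        · exact ⟨-1, by simp [hxdef, h, h', Ne.symm hij]⟩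
        · exact ⟨0, by simp [hxdef, h, h']⟩
    · refine ⟨0, ?_⟩
      simp only [hxdef]
      rw [Finset.sum_sub_distrib]
      rw [Finset.sum_ite_eq' Finset.univ i (fun _ => (1 : ℚ)),
          Finset.sum_ite_eq' Finset.univ j (fun _ => (1 : ℚ))]
      simp
  have hnorm : ∑ k, x k * x k = 2 := by
    have hterm : ∀ k, x k * x k = (if k = i then 1 else 0) + (if k = j then 1 else 0) := by
      intro k
      rcases eq_or_ne k i with h | h
      · subst h; simp [hxdef, hij]
      · rcases eq_or_ne k j with h' | h'
        · subst h'; simp [hxdef, h]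
        · simp [hxdef, h, h']
    calc ∑ k, x k * x k = ∑ k : Fin 6, ((if k = i then 1 else 0) + (if k = j then 1 else 0) : ℚ) :=
          Finset.sum_congr rfl (fun k _ => hterm k)
      _ = 2 := by
          rw [Finset.sum_add_distrib,
              Finset.sum_ite_eq' Finset.univ i (fun _ => (1 : ℚ)),
              Finset.sum_ite_eq' Finset.univ j (fun _ => (1 : ℚ))]
          norm_num
  exact hroot x hx hDn hnorm

theorem stmt9 :
    (∀ F : Finset (Finset (Fin 6)),
      (∀ s ∈ F, s.card = 3) →
      (∀ r ∈ F, ∀ s ∈ F, r ≠ s → (symmDiff r s).card ∈ ({4, 6} : Set ℕ)) →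
      rootFreeColl F → F.card ≤ 3) ∧
    (∃ F : Finset (Finset (Fin 6)),
      (∀ s ∈ F, s.card = 3) ∧
      (∀ r ∈ F, ∀ s ∈ F, r ≠ s → (symmDiff r s).card ∈ ({4, 6} : Set ℕ)) ∧
      rootFreeColl F ∧ F.card = 3) := by
  constructor
  · intro F h3 hsym hroot
    by_contra hle
    push_neg at hle
    obtain ⟨G, hGF, hG4⟩ := Finset.exists_subset_card_eq (n := 4) hle
    have hGne : G.Nonempty := by rw [← Finset.card_pos, hG4]; norm_num
    obtain ⟨a, haG⟩ := hGne
    have hE3 : (G.erase a).card = 3 := by rw [Finset.card_erase_of_mem haG, hG4]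
    obtain ⟨b, c, d, hbc, hbd, hcd, hE⟩ := Finset.card_eq_three.mp hE3
    have hbE : b ∈ G.erase a := by rw [hE]; simp
    have hcE : c ∈ G.erase a := by rw [hE]; simp
    have hdE : d ∈ G.erase a := by rw [hE]; simp
    have hab : a ≠ b := (Finset.mem_erase.mp hbE).1.symm
    have hac : a ≠ c := (Finset.mem_erase.mp hcE).1.symm
    have had : a ≠ d := (Finset.mem_erase.mp hdE).1.symm
    have haF : a ∈ F := hGF haG
    have hbF : b ∈ F := hGF (Finset.mem_of_mem_erase hbE)
    have hcF : c ∈ F := hGF (Finset.mem_of_mem_erase hcE)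
    have hdF : d ∈ F := hGF (Finset.mem_of_mem_erase hdE)
    have hmemL : ∀ t ∈ F, t ∈ L := fun t ht => memL t (h3 t ht)
    have hsym' : ∀ u ∈ F, ∀ v ∈ F, u ≠ v →
        (symmDiff u v).card = 4 ∨ (symmDiff u v).card = 6 := by
      intro u hu v hv huv
      have := hsym u hu v hv huv
      simpa [Set.mem_insert_iff] using this
    have inter1 : ∀ u ∈ F, ∀ v ∈ F, ∀ w ∈ F, u ≠ v → u ≠ w → v ≠ w → (u ∩ v).card = 1 := by
      intro u hu v hv w hw huv huw hvw
      rcases hsym' u hu v hv huv with h4 | h6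
      · exact sd4 u (hmemL u hu) v (hmemL v hv) h4
      · exact absurd (sd6 u (hmemL u hu) v (hmemL v hv) w (hmemL w hw) h6
          (hsym' u hu w hw huw) (hsym' v hv w hw hvw)) (by simp)
    have iab : (a ∩ b).card = 1 := inter1 a haF b hbF c hcF hab hac hbc
    have iac : (a ∩ c).card = 1 := inter1 a haF c hcF b hbF hac hab hbc.symm
    have ibc : (b ∩ c).card = 1 := inter1 b hbF c hcF a haF hbc hab.symm hac.symm
    have iad : (a ∩ d).card = 1 := inter1 a haF d hdF b hbF had hab hbd.symm
    have ibd : (b ∩ d).card = 1 := inter1 b hbF d hdF a haF hbd hab.symm had.symm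
    have icd : (c ∩ d).card = 1 := inter1 c hcF d hdF a haF hcd hac.symm had.symm
    obtain ⟨i, j, hij, hr⟩ := key a (hmemL a haF) b (hmemL b hbF) iab c (hmemL c hcF) iac ibc
      d (hmemL d hdF) iad ibd icd
    rcases hr with h | h | h
    · exact mkroot hroot haF hbF hcF hdF hab hac had hbc hbd hcd hij h
    · exact mkroot hroot haF hcF hbF hdF hac hab had hbc.symm hcd hbd hij h
    · exact mkroot hroot haF hdF hbF hcF had hab hac hbd.symm hcd.symm hbc hij h
  · refine ⟨{{0,1,2}, {0,3,4}, {1,3,5}}, by decide, by decide, ?_, by decide⟩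
    rintro x ⟨α, h0, hx⟩ ⟨hint, -⟩ hnorm
    have hF : ({{0,1,2}, {0,3,4}, {1,3,5}} : Finset (Finset (Fin 6)))
        = insert {0,1,2} (insert {0,3,4} {{1,3,5}}) := rfl
    rw [hF, Finset.sum_insert (by decide), Finset.sum_insert (by decide),
        Finset.sum_singleton] at h0
    have hk : ∀ k, x k = α {0,1,2} * charVecQ {0,1,2} k + α {0,3,4} * charVecQ {0,3,4} k
        + α {1,3,5} * charVecQ {1,3,5} k := by
      intro k
      rw [hx, hF, Finset.sum_insert (by decide), Finset.sum_insert (by decide),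
          Finset.sum_singleton]
      simp only [Pi.add_apply, Pi.smul_apply, smul_eq_mul]
      ring
    set a := α ({0,1,2} : Finset (Fin 6))
    set b := α ({0,3,4} : Finset (Fin 6))
    set c := α ({1,3,5} : Finset (Fin 6))
    have e0 : x 0 = a + b := by rw [hk 0, show charVecQ ({0,1,2} : Finset (Fin 6)) 0 = 1 from rfl, show charVecQ ({0,3,4} : Finset (Fin 6)) 0 = 1 from rfl, show charVecQ ({1,3,5} : Finset (Fin 6)) 0 = 0 from rfl]; ring
    have e1 : x 1 = a + c := by rw [hk 1, show charVecQ ({0,1,2} : Finset (Fin 6)) 1 = 1 from rfl, show charVecQ ({0,3,4} : Finset (Fin 6)) 1 = 0 from rfl, show charVecQ ({1,3,5} : Finset (Fin 6)) 1 = 1 from rfl]; ring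
    have e2 : x 2 = a := by rw [hk 2, show charVecQ ({0,1,2} : Finset (Fin 6)) 2 = 1 from rfl, show charVecQ ({0,3,4} : Finset (Fin 6)) 2 = 0 from rfl, show charVecQ ({1,3,5} : Finset (Fin 6)) 2 = 0 from rfl]; ring
    have e3 : x 3 = b + c := by rw [hk 3, show charVecQ ({0,1,2} : Finset (Fin 6)) 3 = 0 from rfl, show charVecQ ({0,3,4} : Finset (Fin 6)) 3 = 1 from rfl, show charVecQ ({1,3,5} : Finset (Fin 6)) 3 = 1 from rfl]; ring
    have e4 : x 4 = b := by rw [hk 4, show charVecQ ({0,1,2} : Finset (Fin 6)) 4 = 0 from rfl, show charVecQ ({0,3,4} : Finset (Fin 6)) 4 = 1 from rfl, show charVecQ ({1,3,5} : Finset (Fin 6)) 4 = 0 from rfl]; ring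
    have e5 : x 5 = c := by rw [hk 5, show charVecQ ({0,1,2} : Finset (Fin 6)) 5 = 0 from rfl, show charVecQ ({0,3,4} : Finset (Fin 6)) 5 = 0 from rfl, show charVecQ ({1,3,5} : Finset (Fin 6)) 5 = 1 from rfl]; ring
    obtain ⟨m, hm⟩ := hint 2
    obtain ⟨n, hn⟩ := hint 4
    rw [Fin.sum_univ_six, e0, e1, e2, e3, e4, e5] at hnorm
    have ha : a = (m : ℚ) := by rw [← e2, hm]
    have hb : b = (n : ℚ) := by rw [← e4, hn]
    have hc : c = -(m : ℚ) - n := by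
      rw [ha, hb] at h0; linarith
    rw [ha, hb, hc] at hnorm
    have hZ : (4 : ℤ) * (m ^ 2 + m * n + n ^ 2) = 2 := by
      have h4 : (4 : ℚ) * ((m : ℚ) ^ 2 + m * n + n ^ 2) = 2 := by linear_combination hnorm
      exact_mod_cast h4
    omega
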